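/- arXiv:1310.2104 — 5 statements merged into one kernel-verified Lean document; each statement's English description precedes it below -/
import Mathlib

section
/- For every nonnegative integer n, CP_n^{(k)}(x;λ,μ) = Σ_{l=0}^{n} C(n,l) · C_{n-l}^{(k)} · S_l(-x;λ,μ), where C_m^{(k)} = C_m^{(k)}(0) are the poly-Cauchy numbers of the first kind. -/
open PowerSeries Finset

noncomputable section

/-- The formal power series log(1+t). -/
def logS : PowerSeries ℝ :=
  PowerSeries.mk fun n => if n = 0 then 0 else (-1) ^ (n + 1) / n

/-- Composition of formal power series (valid when `g` has zero constant term). -/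
def compS (f g : PowerSeries ℝ) : PowerSeries ℝ :=
  PowerSeries.mk fun n =>
    ∑ m ∈ Finset.range (n + 1), (PowerSeries.coeff (R := ℝ) m f) * PowerSeries.coeff (R := ℝ) n (g ^ m)

/-- The formal power series (1+t)^x = Σ (x)_n t^n / n!. -/
def onePow (x : ℝ) : PowerSeries ℝ :=
  PowerSeries.mk fun n => (descPochhammer ℝ n).eval x / n.factorial

/-- The polylogarithm factorial function Lif_k(t) = Σ t^n/(n!(n+1)^k). -/
def Lif (k : ℤ) : PowerSeries ℝ :=
  PowerSeries.mk fun n => 1 / (n.factorial * ((n : ℝ) + 1) ^ k)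

/-- The Peters factor (1+(1+t)^λ)^(-μ) = 2^(-μ) exp(-μ log(1 + ((1+t)^λ - 1)/2)). -/
def peters (lam mu : ℝ) : PowerSeries ℝ :=
  PowerSeries.C (R := ℝ) ((2 : ℝ) ^ (-mu)) *
    compS (PowerSeries.exp ℝ)
      (PowerSeries.C (R := ℝ) (-mu) * compS logS (PowerSeries.C (R := ℝ) (1 / 2) * (onePow lam - 1)))

/-- The Peters polynomials S_n(x;λ,μ). -/
def petersPoly (lam mu x : ℝ) (n : ℕ) : ℝ :=
  n.factorial * PowerSeries.coeff (R := ℝ) n (peters lam mu * onePow x)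

/-- Poly-Cauchy polynomials of the first kind C_n^{(k)}(x). -/
def pC (k : ℤ) (x : ℝ) (n : ℕ) : ℝ :=
  n.factorial * PowerSeries.coeff (R := ℝ) n (compS (Lif k) logS * onePow (-x))

/-- Poly-Cauchy polynomials of the second kind Ĉ_n^{(k)}(x). -/
def pChat (k : ℤ) (x : ℝ) (n : ℕ) : ℝ :=
  n.factorial * PowerSeries.coeff (R := ℝ) n (compS (Lif k) (-logS) * onePow x)

/-- The poly-Cauchy of the first kind and Peters mixed-type polynomials CP_n^{(k)}(x;λ,μ). -/
def CP (k : ℤ) (lam mu x : ℝ) (n : ℕ) : ℝ :=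
  n.factorial * PowerSeries.coeff (R := ℝ) n (peters lam mu * compS (Lif k) logS * onePow (-x))

/-- The poly-Cauchy of the second kind and Peters mixed-type polynomials ĈP_n^{(k)}(x;λ,μ). -/
def CPhat (k : ℤ) (lam mu x : ℝ) (n : ℕ) : ℝ :=
  n.factorial * PowerSeries.coeff (R := ℝ) n (peters lam mu * compS (Lif k) (-logS) * onePow x)

/-- Signed Stirling numbers of the first kind: (x)_n = Σ_l s(n,l) x^l. -/
def stirS (n l : ℕ) : ℝ := (descPochhammer ℝ n).coeff l

theorem CP_eq_sum_polyCauchyNum_mul_peters (k : ℤ) (lam mu x : ℝ) (n : ℕ) :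
    CP k lam mu x n =
      ∑ l ∈ Finset.range (n + 1),
        (n.choose l : ℝ) * pC k 0 (n - l) * petersPoly lam mu (-x) l := by
  have hone : onePow 0 = 1 := by
    ext m
    simp [onePow, PowerSeries.coeff_one, descPochhammer_eval_zero]
    split <;> simp_all
  have hre : peters lam mu * compS (Lif k) logS * onePow (-x)
      = (peters lam mu * onePow (-x)) * compS (Lif k) logS := by ring
  rw [CP, hre, PowerSeries.coeff_mul,
    Finset.Nat.sum_antidiagonal_eq_sum_range_succ_mk, Finset.mul_sum]
  refine Finset.sum_congr rfl fun l hl => ?_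
  rw [Finset.mem_range, Nat.lt_succ_iff] at hl
  rw [pC, petersPoly, neg_zero, hone, mul_one]
  have : ((n.choose l : ℝ)) * (((n - l).factorial : ℝ) * ((l.factorial : ℝ))) = n.factorial := by
    rw [← Nat.cast_mul, ← Nat.cast_mul, ← Nat.choose_mul_factorial_mul_factorial hl]
    push_cast; ring
  calc (n.factorial : ℝ) * (coeff l (peters lam mu * onePow (-x)) * coeff (n-l) (compS (Lif k) logS))
      = ((n.choose l : ℝ)) * (((n - l).factorial : ℝ) * ((l.factorial : ℝ)))
        * (coeff l (peters lam mu * onePow (-x)) * coeff (n-l) (compS (Lif k) logS)) := by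
        rw [this]
    _ = _ := by ring
end
end

section
/- For every nonnegative integer n and all x, y, the addition formula CP_n^{(k)}(x+y;λ,μ) = Σ_{j=0}^{n} (-1)^j C(n,j) CP_{n-j}^{(k)}(x;λ,μ) · y^{(j)} holds, where y^{(j)} = y(y+1)···(y+j-1) is the rising factorial. -/
open PowerSeries Finset

noncomputable section

lemma smeval_descPochhammer_real (m : ℕ) (t : ℝ) :
    (descPochhammer ℤ m).smeval t = (descPochhammer ℝ m).eval t := by
  rw [← Polynomial.aeval_eq_smeval, Polynomial.aeval_def, ← Polynomial.eval_map,
    descPochhammer_map]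

lemma descPochhammer_eval_add_real (r s : ℝ) (m : ℕ) :
    (descPochhammer ℝ m).eval (r + s) =
      ∑ j ∈ Finset.range (m + 1), (m.choose j : ℝ) *
        ((descPochhammer ℝ j).eval r * (descPochhammer ℝ (m - j)).eval s) := by
  have h := Ring.descPochhammer_smeval_add (R := ℝ) (r := r) (s := s) m (Commute.all r s)
  rw [smeval_descPochhammer_real] at h
  rw [h, Finset.Nat.sum_antidiagonal_eq_sum_range_succ
    (f := fun i j => (m.choose i : ℝ) *
      ((descPochhammer ℤ i).smeval r * (descPochhammer ℤ j).smeval s))]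
  refine Finset.sum_congr rfl fun j hj => by
    rw [smeval_descPochhammer_real, smeval_descPochhammer_real]

lemma onePow_add (a b : ℝ) : onePow (a + b) = onePow a * onePow b := by
  ext m
  rw [PowerSeries.coeff_mul, Finset.Nat.sum_antidiagonal_eq_sum_range_succ
    (f := fun i j => PowerSeries.coeff (R := ℝ) i (onePow a) * PowerSeries.coeff (R := ℝ) j (onePow b))]
  simp only [onePow, PowerSeries.coeff_mk]
  rw [descPochhammer_eval_add_real, Finset.sum_div]
  refine Finset.sum_congr rfl fun j hj => ?_
  have hj' : j ≤ m := Nat.lt_succ_iff.mp (Finset.mem_range.mp hj)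
  rw [Nat.cast_choose ℝ hj']
  have h1 : (j.factorial : ℝ) ≠ 0 := Nat.cast_ne_zero.mpr (Nat.factorial_ne_zero j)
  have h2 : ((m - j).factorial : ℝ) ≠ 0 := Nat.cast_ne_zero.mpr (Nat.factorial_ne_zero _)
  have h3 : (m.factorial : ℝ) ≠ 0 := Nat.cast_ne_zero.mpr (Nat.factorial_ne_zero m)
  field_simp

lemma descPochhammer_eval_neg_real (j : ℕ) (t : ℝ) :
    (descPochhammer ℝ j).eval (-t) = (-1 : ℝ) ^ j * (ascPochhammer ℝ j).eval t := by
  have h := ascPochhammer_eval_neg_eq_descPochhammer ℝ (-t) j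
  rw [neg_neg] at h
  have hs : ((-1 : ℝ) ^ j) * ((-1 : ℝ) ^ j) = 1 := by
    rw [← pow_add, ← two_mul, pow_mul]; norm_num
  rw [h, ← mul_assoc, hs, one_mul]

theorem CP_add (k : ℤ) (lam mu x y : ℝ) (n : ℕ) :
    CP k lam mu (x + y) n =
      ∑ j ∈ Finset.range (n + 1),
        (-1 : ℝ) ^ j * (n.choose j : ℝ) * CP k lam mu x (n - j) *
          (ascPochhammer ℝ j).eval y := by
  have hne : -(x + y) = -x + -y := by ring
  rw [CP, hne, onePow_add, ← mul_assoc,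
    mul_comm (peters lam mu * compS (Lif k) logS * onePow (-x)) (onePow (-y)),
    PowerSeries.coeff_mul,
    Finset.Nat.sum_antidiagonal_eq_sum_range_succ
    (f := fun i j => PowerSeries.coeff (R := ℝ) i (onePow (-y)) *
      PowerSeries.coeff (R := ℝ) j (peters lam mu * compS (Lif k) logS * onePow (-x))), Finset.mul_sum]
  refine Finset.sum_congr rfl fun j hj => ?_
  have hj' : j ≤ n := Nat.lt_succ_iff.mp (Finset.mem_range.mp hj)
  rw [CP]
  have hcoeff : PowerSeries.coeff (R := ℝ) j (onePow (-y)) = (descPochhammer ℝ j).eval (-y) / j.factorial := by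
    simp [onePow]
  rw [hcoeff, descPochhammer_eval_neg_real, Nat.cast_choose ℝ hj']
  have h1 : (j.factorial : ℝ) ≠ 0 := Nat.cast_ne_zero.mpr (Nat.factorial_ne_zero j)
  have h2 : ((n - j).factorial : ℝ) ≠ 0 := Nat.cast_ne_zero.mpr (Nat.factorial_ne_zero _)
  field_simp
end
end

section
/- For every nonnegative integer n, the expansion in rising factorials CP_n^{(k)}(x;λ,μ) = Σ_{m=0}^{n} (-1)^m C(n,m) CP_{n-m}^{(k)}(0;λ,μ) · x^{(m)} holds, where x^{(m)} = x(x+1)···(x+m-1). -/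
open PowerSeries Finset

noncomputable section

lemma onePow_zero : onePow 0 = 1 := by
  ext n
  simp [onePow, descPochhammer_eval_zero, PowerSeries.coeff_one]
  aesop

lemma CP_zero (k : ℤ) (lam mu : ℝ) (m : ℕ) :
    CP k lam mu 0 m =
      m.factorial * PowerSeries.coeff (R := ℝ) m (peters lam mu * compS (Lif k) logS) := by
  simp [CP, onePow_zero]

theorem CP_eq_sum_risingFactorial (k : ℤ) (lam mu x : ℝ) (n : ℕ) :
    CP k lam mu x n =
      ∑ m ∈ Finset.range (n + 1),
        (-1 : ℝ) ^ m * (n.choose m : ℝ) * CP k lam mu 0 (n - m) *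
          (ascPochhammer ℝ m).eval x := by
  rw [CP, mul_comm (peters lam mu * compS (Lif k) logS) (onePow (-x)),
    PowerSeries.coeff_mul, Finset.Nat.sum_antidiagonal_eq_sum_range_succ_mk,
    Finset.mul_sum]
  refine Finset.sum_congr rfl fun m hm => ?_
  rw [Finset.mem_range, Nat.lt_succ_iff] at hm
  rw [CP_zero]
  have hd : (descPochhammer ℝ m).eval (-x) = (-1 : ℝ) ^ m * (ascPochhammer ℝ m).eval x := by
    have h := ascPochhammer_eval_neg_eq_descPochhammer (R := ℝ) x m
    have h2 : ((-1:ℝ)^m)*((-1:ℝ)^m) = 1 := by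
      rw [← pow_add]; simp [pow_mul]
    calc (descPochhammer ℝ m).eval (-x)
        = ((-1:ℝ)^m*(-1:ℝ)^m) * (descPochhammer ℝ m).eval (-x) := by rw [h2]; ring
      _ = (-1:ℝ)^m * (ascPochhammer ℝ m).eval x := by
          rw [mul_assoc, ← ascPochhammer_eval_neg_eq_descPochhammer, neg_neg]
  have hfac : (n.choose m : ℝ) * m.factorial * (n - m).factorial = n.factorial := by
    exact_mod_cast congrArg (Nat.cast : ℕ → ℝ)
      (Nat.choose_mul_factorial_mul_factorial hm)
  simp only [onePow, PowerSeries.coeff_mk, hd]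
  field_simp
  rw [← hfac]
  ring
end
end

section
/- For n ≥ 2 and 1 ≤ m ≤ n−1, the identity m·Σ_{l=0}^{n-m} C(n,l) s(n−l,m) Ĉ P_l^{(k)}(0;λ,μ) = −μλm·Σ_{l=0}^{n-1-m} C(n−1,l) s(n−1−l,m) Ĉ P_l^{(k)}(λ−1;λ,μ+1) + Σ_{l=0}^{n-m} C(n−1,l) s(n−1−l,m−1) Ĉ P_l^{(k−1)}(−1;λ,μ) + (m−1)·Σ_{l=0}^{n-m} C(n−1,l) s(n−1−l,m−1) Ĉ P_l^{(k)}(−1;λ,μ) holds. -/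
open PowerSeries Finset

noncomputable section

lemma coeff_compS (f g : PowerSeries ℝ) (n : ℕ) :
    coeff (R := ℝ) n (compS f g) = ∑ m ∈ Finset.range (n + 1), coeff (R := ℝ) m f * coeff (R := ℝ) n (g ^ m) := by
  simp [compS]

lemma coeff_pow_eq_zero {g : PowerSeries ℝ} (hg : constantCoeff (R := ℝ) g = 0) :
    ∀ {m i : ℕ}, i < m → coeff (R := ℝ) i (g ^ m) = 0 := by
  intro m
  induction m with
  | zero => intro i h; omega
  | succ m ih =>
    intro i h
    rw [pow_succ, PowerSeries.coeff_mul]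
    apply Finset.sum_eq_zero
    rintro ⟨a, b⟩ hab
    rw [Finset.HasAntidiagonal.mem_antidiagonal] at hab
    rcases Nat.eq_zero_or_pos b with hb | hb
    · subst hb
      rw [PowerSeries.coeff_zero_eq_constantCoeff, hg, mul_zero]
    · rw [ih (by omega), zero_mul]

lemma coeff_mul_congr {A A' B B' : PowerSeries ℝ} {n : ℕ}
    (hA : ∀ i ≤ n, coeff (R := ℝ) i A = coeff (R := ℝ) i A') (hB : ∀ i ≤ n, coeff (R := ℝ) i B = coeff (R := ℝ) i B') :
    coeff (R := ℝ) n (A * B) = coeff (R := ℝ) n (A' * B') := by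
  rw [PowerSeries.coeff_mul, PowerSeries.coeff_mul]
  apply Finset.sum_congr rfl
  rintro ⟨a, b⟩ hab
  rw [Finset.HasAntidiagonal.mem_antidiagonal] at hab
  rw [hA a (by omega), hB b (by omega)]

lemma coeff_aeval_mul {g : PowerSeries ℝ} (hg : constantCoeff (R := ℝ) g = 0) (A : Polynomial ℝ)
    (h : PowerSeries ℝ) (n : ℕ) :
    coeff (R := ℝ) n (Polynomial.eval₂ (C (R := ℝ)) g A * h) =
      ∑ m ∈ Finset.range (n + 1), A.coeff m * coeff (R := ℝ) n (g ^ m * h) := by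
  induction A using Polynomial.induction_on' with
  | add p q hp hq =>
    rw [Polynomial.eval₂_add, add_mul, map_add, hp, hq, ← Finset.sum_add_distrib]
    exact Finset.sum_congr rfl fun m _ => by rw [Polynomial.coeff_add, add_mul]
  | monomial m a =>
    simp only [Polynomial.eval₂_monomial, Polynomial.coeff_monomial]
    rcases le_or_gt m n with hm | hm
    · rw [Finset.sum_eq_single m]
      · rw [mul_assoc, ← PowerSeries.coeff_C_mul, if_pos rfl]
      · intro b _ hb; simp [Ne.symm hb]
      · intro hmem; exact absurd (Finset.mem_range.2 (by omega)) hmem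
    · rw [Finset.sum_eq_zero, mul_assoc, PowerSeries.coeff_C_mul, PowerSeries.coeff_mul,
        Finset.sum_eq_zero, mul_zero]
      · rintro ⟨a', b'⟩ hab
        rw [Finset.HasAntidiagonal.mem_antidiagonal] at hab
        rw [coeff_pow_eq_zero hg (by omega), zero_mul]
      · intro b hb
        rw [Finset.mem_range] at hb
        simp [show ¬ (m = b) by omega]

lemma coeff_aeval {g : PowerSeries ℝ} (hg : constantCoeff (R := ℝ) g = 0) (A : Polynomial ℝ) (n : ℕ) :
    coeff (R := ℝ) n (Polynomial.eval₂ (C (R := ℝ)) g A) =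
      ∑ m ∈ Finset.range (n + 1), A.coeff m * coeff (R := ℝ) n (g ^ m) := by
  have := coeff_aeval_mul hg A 1 n
  simpa using this

/-- `compS f g` agrees with evaluation of any polynomial truncation of `f` (with enough terms). -/

lemma coeff_compS_eq_eval_trunc {g : PowerSeries ℝ} (hg : constantCoeff (R := ℝ) g = 0)
    (f : PowerSeries ℝ) {n N : ℕ} (hN : n < N) :
    coeff (R := ℝ) n (compS f g) = coeff (R := ℝ) n (Polynomial.eval₂ (C (R := ℝ)) g (trunc N f)) := by
  rw [coeff_aeval hg, coeff_compS]
  apply Finset.sum_congr rfl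
  intro m hm
  rw [Finset.mem_range] at hm
  rw [PowerSeries.coeff_trunc, if_pos (by omega)]

lemma compS_mul {g : PowerSeries ℝ} (hg : constantCoeff (R := ℝ) g = 0) (f₁ f₂ : PowerSeries ℝ) :
    compS (f₁ * f₂) g = compS f₁ g * compS f₂ g := by
  ext n
  rw [coeff_compS_eq_eval_trunc hg _ (Nat.lt_succ_self n),
    coeff_mul_congr (fun i hi => coeff_compS_eq_eval_trunc hg f₁ (N := n+1) (by omega))
      (fun i hi => coeff_compS_eq_eval_trunc hg f₂ (N := n+1) (by omega)),
    ← Polynomial.eval₂_mul]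
  rw [coeff_aeval hg, coeff_aeval hg]
  apply Finset.sum_congr rfl
  intro m hm
  rw [Finset.mem_range] at hm
  congr 1
  have h1 : (trunc (n+1) f₁ * trunc (n+1) f₂).coeff m
      = (trunc (n+1) ((trunc (n+1) f₁ : PowerSeries ℝ) * (trunc (n+1) f₂ : PowerSeries ℝ))).coeff m := by
    rw [PowerSeries.coeff_trunc, if_pos (by omega), ← Polynomial.coe_mul, Polynomial.coeff_coe]
  rw [h1, PowerSeries.trunc_trunc_mul_trunc, PowerSeries.coeff_trunc, if_pos (by omega)]

lemma compS_add (f₁ f₂ g : PowerSeries ℝ) : compS (f₁ + f₂) g = compS f₁ g + compS f₂ g := by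
  ext n
  simp [coeff_compS, add_mul, Finset.sum_add_distrib]

lemma compS_C (a : ℝ) (g : PowerSeries ℝ) : compS (C (R := ℝ) a) g = C (R := ℝ) a := by
  ext n
  rw [coeff_compS, Finset.sum_eq_single 0]
  · simp [PowerSeries.coeff_C]
  · intro b _ hb
    simp [PowerSeries.coeff_C, hb]
  · simp

lemma compS_C_mul (a : ℝ) (f g : PowerSeries ℝ) : compS (C (R := ℝ) a * f) g = C (R := ℝ) a * compS f g := by
  ext n
  simp [coeff_compS, PowerSeries.coeff_C_mul, Finset.mul_sum, mul_assoc]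

lemma compS_X {g : PowerSeries ℝ} (hg : constantCoeff (R := ℝ) g = 0) : compS X g = g := by
  ext n
  rw [coeff_compS]
  rcases Nat.eq_zero_or_pos n with rfl | hn
  · simp [PowerSeries.coeff_X, hg]
  · rw [Finset.sum_eq_single 1]
    · simp
    · intro b _ hb
      simp [PowerSeries.coeff_X, hb]
    · intro h; exact absurd (Finset.mem_range.2 (by omega)) h

lemma compS_one (g : PowerSeries ℝ) : compS 1 g = 1 := by
  have := compS_C 1 g; simpa using this

lemma constantCoeff_compS (f g : PowerSeries ℝ) :
    constantCoeff (R := ℝ) (compS f g) = constantCoeff (R := ℝ) f := by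
  rw [← PowerSeries.coeff_zero_eq_constantCoeff_apply, coeff_compS]
  simp

lemma D_eval₂ (g : PowerSeries ℝ) (A : Polynomial ℝ) :
    d⁄dX ℝ (Polynomial.eval₂ (C (R := ℝ)) g A) =
      Polynomial.eval₂ (C (R := ℝ)) g (Polynomial.derivative A) * d⁄dX ℝ g := by
  induction A using Polynomial.induction_on' with
  | add p q hp hq =>
    rw [Polynomial.eval₂_add, map_add, hp, hq, map_add, Polynomial.eval₂_add, add_mul]
  | monomial m a =>
    rw [Polynomial.eval₂_monomial, Polynomial.derivative_monomial, Polynomial.eval₂_monomial,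
      Derivation.leibniz, Derivation.leibniz_pow]
    rcases Nat.eq_zero_or_pos m with rfl | hm
    · simp
    · rw [smul_eq_mul, nsmul_eq_mul, smul_eq_mul, map_mul, map_natCast,
        PowerSeries.derivative_C, smul_zero, add_zero]
      ring

lemma compS_deriv {g : PowerSeries ℝ} (hg : constantCoeff (R := ℝ) g = 0) (f : PowerSeries ℝ) :
    d⁄dX ℝ (compS f g) = compS (d⁄dX ℝ f) g * d⁄dX ℝ g := by
  ext n
  rw [PowerSeries.coeff_derivative, coeff_compS_eq_eval_trunc hg f (N := n + 2) (by omega),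
    ← PowerSeries.coeff_derivative, D_eval₂]
  rw [show coeff (R := ℝ) n (compS (d⁄dX ℝ f) g * d⁄dX ℝ g)
      = coeff (R := ℝ) n (Polynomial.eval₂ (C (R := ℝ)) g (trunc (n+1) (d⁄dX ℝ f)) * d⁄dX ℝ g) from
    coeff_mul_congr (fun i hi => coeff_compS_eq_eval_trunc hg _ (N := n + 1) (by omega))
      (fun i _ => rfl)]
  rw [coeff_aeval_mul hg, coeff_aeval_mul hg]
  apply Finset.sum_congr rfl
  intro m hm
  rw [Finset.mem_range] at hm
  congr 1
  rw [PowerSeries.coeff_trunc, if_pos (by omega), Polynomial.coeff_derivative,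
    PowerSeries.coeff_trunc, if_pos (by omega), PowerSeries.coeff_derivative]

lemma constantCoeff_logS : constantCoeff (R := ℝ) logS = 0 := by
  simp [logS, ← PowerSeries.coeff_zero_eq_constantCoeff_apply]

lemma coeff_onePow (x : ℝ) (n : ℕ) :
    coeff (R := ℝ) n (onePow x) = (descPochhammer ℝ n).eval x / n.factorial := by
  simp [onePow]

lemma constantCoeff_onePow (x : ℝ) : constantCoeff (R := ℝ) (onePow x) = 1 := by
  simp [← PowerSeries.coeff_zero_eq_constantCoeff_apply, coeff_onePow]

/-- Pascal-type recurrence: (1+X)·(1+t)^(x-1) = (1+t)^x. -/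

lemma one_add_X_mul_onePow (x : ℝ) : (1 + X) * onePow (x - 1) = onePow x := by
  ext n
  rw [add_mul, one_mul, map_add]
  cases n with
  | zero => simp [PowerSeries.coeff_zero_eq_constantCoeff_apply, constantCoeff_onePow]
  | succ j =>
    rw [PowerSeries.coeff_succ_X_mul, coeff_onePow, coeff_onePow, coeff_onePow,
      show (descPochhammer ℝ (j+1)).eval x = x * (descPochhammer ℝ j).eval (x-1) by
        rw [descPochhammer_succ_left]; simp,
      descPochhammer_succ_eval, Nat.factorial_succ]
    have h1 : ((j + 1 : ℕ) : ℝ) ≠ 0 := by positivity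
    have h2 : ((j.factorial : ℕ) : ℝ) ≠ 0 := by positivity
    push_cast
    field_simp
    ring

lemma D_onePow (x : ℝ) : d⁄dX ℝ (onePow x) = C (R := ℝ) x * onePow (x - 1) := by
  ext n
  rw [PowerSeries.coeff_derivative, PowerSeries.coeff_C_mul, coeff_onePow, coeff_onePow,
    descPochhammer_succ_left, Polynomial.eval_mul, Polynomial.eval_X, Polynomial.eval_comp,
    Polynomial.eval_sub, Polynomial.eval_X, Polynomial.eval_one, Nat.factorial_succ]
  have h1 : ((n + 1 : ℕ) : ℝ) ≠ 0 := by positivity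
  have h2 : ((n.factorial : ℕ) : ℝ) ≠ 0 := by positivity
  push_cast
  field_simp

lemma D_logS : d⁄dX ℝ logS = onePow (-1) := by
  ext n
  rw [PowerSeries.coeff_derivative, coeff_onePow]
  have hd : (descPochhammer ℝ n).eval (-1) = (-1) ^ n * n.factorial := by
    induction n with
    | zero => simp
    | succ n ih =>
      rw [descPochhammer_succ_right, Polynomial.eval_mul, Polynomial.eval_sub, ih,
        Polynomial.eval_X, Polynomial.eval_natCast, Nat.factorial_succ]
      push_cast
      ring
  rw [hd, logS, PowerSeries.coeff_mk, if_neg (by omega)]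
  have h2 : ((n.factorial : ℕ) : ℝ) ≠ 0 := by positivity
  have h1 : ((n : ℝ) + 1) ≠ 0 := by positivity
  push_cast
  field_simp
  ring

lemma one_add_X_mul_D_logS : (1 + X) * d⁄dX ℝ logS = 1 := by
  rw [D_logS, show (-1 : ℝ) = 0 - 1 by ring, one_add_X_mul_onePow, onePow_zero]

lemma D_exp : d⁄dX ℝ (PowerSeries.exp ℝ) = PowerSeries.exp ℝ := by
  ext n
  rw [PowerSeries.coeff_derivative, PowerSeries.coeff_exp, PowerSeries.coeff_exp,
    Nat.factorial_succ]
  have h1 : ((n + 1 : ℕ) : ℝ) ≠ 0 := by positivity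
  have h2 : ((n.factorial : ℕ) : ℝ) ≠ 0 := by positivity
  push_cast
  field_simp

/-- Derivative of exp composed with a series. -/

lemma D_expComp {w : PowerSeries ℝ} (hw : constantCoeff (R := ℝ) w = 0) :
    d⁄dX ℝ (compS (PowerSeries.exp ℝ) w) = compS (PowerSeries.exp ℝ) w * d⁄dX ℝ w := by
  rw [compS_deriv hw, D_exp]

lemma constantCoeff_expComp (w : PowerSeries ℝ) :
    constantCoeff (R := ℝ) (compS (PowerSeries.exp ℝ) w) = 1 := by
  rw [constantCoeff_compS, PowerSeries.constantCoeff_exp]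

lemma expComp_mul_expComp_neg {w : PowerSeries ℝ} (hw : constantCoeff (R := ℝ) w = 0) :
    compS (PowerSeries.exp ℝ) w * compS (PowerSeries.exp ℝ) (-w) = 1 := by
  have hw' : constantCoeff (R := ℝ) (-w) = 0 := by rw [map_neg, hw, neg_zero]
  apply PowerSeries.derivative.ext
  · rw [Derivation.leibniz, D_expComp hw, D_expComp hw', map_neg, Derivation.map_one_eq_zero]
    rw [smul_eq_mul, smul_eq_mul]
    ring
  · rw [map_mul, constantCoeff_expComp, constantCoeff_expComp, map_one, mul_one]

lemma expComp_add {u w : PowerSeries ℝ} (hu : constantCoeff (R := ℝ) u = 0)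
    (hw : constantCoeff (R := ℝ) w = 0) :
    compS (PowerSeries.exp ℝ) (u + w) =
      compS (PowerSeries.exp ℝ) u * compS (PowerSeries.exp ℝ) w := by
  have huw : constantCoeff (R := ℝ) (u + w) = 0 := by rw [map_add, hu, hw, add_zero]
  have key : compS (PowerSeries.exp ℝ) (u + w) * compS (PowerSeries.exp ℝ) (-u) *
      compS (PowerSeries.exp ℝ) (-w) = 1 := by
    have hu' : constantCoeff (R := ℝ) (-u) = 0 := by rw [map_neg, hu, neg_zero]
    have hw' : constantCoeff (R := ℝ) (-w) = 0 := by rw [map_neg, hw, neg_zero]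
    apply PowerSeries.derivative.ext
    · rw [Derivation.leibniz, Derivation.leibniz, D_expComp huw, D_expComp hu', D_expComp hw',
        map_neg, map_neg, map_add, Derivation.map_one_eq_zero]
      simp only [smul_eq_mul]
      ring
    · simp only [map_mul, constantCoeff_expComp, map_one, mul_one]
  calc compS (PowerSeries.exp ℝ) (u + w)
      = compS (PowerSeries.exp ℝ) (u + w) * (compS (PowerSeries.exp ℝ) (-u) * compS (PowerSeries.exp ℝ) u) *
        (compS (PowerSeries.exp ℝ) (-w) * compS (PowerSeries.exp ℝ) w) := by
        rw [mul_comm (compS (PowerSeries.exp ℝ) (-u)), mul_comm (compS (PowerSeries.exp ℝ) (-w)),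
          expComp_mul_expComp_neg hu, expComp_mul_expComp_neg hw, mul_one, mul_one]
    _ = (compS (PowerSeries.exp ℝ) (u + w) * compS (PowerSeries.exp ℝ) (-u) *
        compS (PowerSeries.exp ℝ) (-w)) * (compS (PowerSeries.exp ℝ) u * compS (PowerSeries.exp ℝ) w) := by
        ring
    _ = compS (PowerSeries.exp ℝ) u * compS (PowerSeries.exp ℝ) w := by
        rw [key, one_mul]

lemma ode_solution {F : PowerSeries ℝ} {x : ℝ}
    (hF : (1 + X) * d⁄dX ℝ F = C (R := ℝ) x * F) (h0 : constantCoeff (R := ℝ) F = 1) :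
    F = onePow x := by
  ext n
  induction n with
  | zero =>
    rw [PowerSeries.coeff_zero_eq_constantCoeff_apply, h0,
      PowerSeries.coeff_zero_eq_constantCoeff_apply, constantCoeff_onePow]
  | succ n ih =>
    have h := congrArg (coeff (R := ℝ) n) hF
    rw [add_mul, one_mul, map_add, PowerSeries.coeff_C_mul, PowerSeries.coeff_derivative] at h
    have hx : coeff (R := ℝ) n (X * d⁄dX ℝ F) = coeff (R := ℝ) n F * n := by
      cases n with
      | zero => simp
      | succ j =>
        rw [PowerSeries.coeff_succ_X_mul, PowerSeries.coeff_derivative]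
        push_cast
        ring
    rw [hx, ih] at h
    have h1 : ((n + 1 : ℕ) : ℝ) ≠ 0 := by positivity
    have key : coeff (R := ℝ) (n+1) F = (x - n) * coeff (R := ℝ) n (onePow x) / (n + 1) := by
      field_simp at h ⊢
      push_cast at h ⊢
      linarith [h]
    rw [key, coeff_onePow, coeff_onePow, descPochhammer_succ_eval, Nat.factorial_succ]
    have h2 : ((n.factorial : ℕ) : ℝ) ≠ 0 := by positivity
    push_cast
    field_simp

lemma onePow_eq_expComp (x : ℝ) :
    onePow x = compS (PowerSeries.exp ℝ) (C (R := ℝ) x * logS) := by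
  have hw : constantCoeff (R := ℝ) (C (R := ℝ) x * logS) = 0 := by
    rw [map_mul, constantCoeff_logS, mul_zero]
  symm
  apply ode_solution
  · have hD : d⁄dX ℝ (C (R := ℝ) x * logS) = C (R := ℝ) x * d⁄dX ℝ logS := by
      rw [← smul_eq_C_mul, ← smul_eq_C_mul, Derivation.map_smul]
    rw [D_expComp hw, hD]
    rw [show (1 + X) * (compS (PowerSeries.exp ℝ) (C (R := ℝ) x * logS) * (C (R := ℝ) x * d⁄dX ℝ logS))
        = C (R := ℝ) x * compS (PowerSeries.exp ℝ) (C (R := ℝ) x * logS) * ((1 + X) * d⁄dX ℝ logS) by ring,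
      one_add_X_mul_D_logS, mul_one]
  · exact constantCoeff_expComp _

lemma stirS_eq_zero {n m : ℕ} (h : n < m) : stirS n m = 0 := by
  rw [stirS]
  apply Polynomial.coeff_eq_zero_of_natDegree_lt
  rw [descPochhammer_natDegree]
  exact h

lemma coeff_logS_pow (j m : ℕ) :
    coeff (R := ℝ) j (logS ^ m) = stirS j m * m.factorial / j.factorial := by
  rcases le_or_gt m j with hm | hm
  · -- polynomial identity in x
    have key : ∀ x : ℝ, ∑ i ∈ Finset.range (j + 1), (stirS j i / j.factorial) * x ^ i
        = ∑ i ∈ Finset.range (j + 1), (coeff (R := ℝ) j (logS ^ i) / i.factorial) * x ^ i := by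
      intro x
      have h1 := coeff_onePow x j
      rw [onePow_eq_expComp] at h1
      rw [coeff_compS] at h1
      have h2 : Polynomial.eval x (descPochhammer ℝ j)
          = ∑ i ∈ Finset.range (j + 1), stirS j i * x ^ i := by
        rw [Polynomial.eval_eq_sum_range' (n := j + 1)]
        · rfl
        · rw [descPochhammer_natDegree]; omega
      rw [h2] at h1
      calc ∑ i ∈ Finset.range (j + 1), (stirS j i / j.factorial) * x ^ i
          = (∑ i ∈ Finset.range (j + 1), stirS j i * x ^ i) / j.factorial := by
            rw [Finset.sum_div]; exact Finset.sum_congr rfl fun i _ => by ring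
        _ = ∑ i ∈ Finset.range (j + 1), coeff (R := ℝ) i (PowerSeries.exp ℝ) * coeff (R := ℝ) j ((C (R := ℝ) x * logS) ^ i) := h1.symm
        _ = ∑ i ∈ Finset.range (j + 1), (coeff (R := ℝ) j (logS ^ i) / i.factorial) * x ^ i := by
            apply Finset.sum_congr rfl
            intro i _
            rw [PowerSeries.coeff_exp, mul_pow, ← map_pow, PowerSeries.coeff_C_mul]
            push_cast
            ring
    -- convert to polynomial equality
    have hpoly : (∑ i ∈ Finset.range (j + 1), Polynomial.C (stirS j i / j.factorial) * Polynomial.X ^ i)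
        = ∑ i ∈ Finset.range (j + 1), Polynomial.C (coeff (R := ℝ) j (logS ^ i) / i.factorial) * Polynomial.X ^ i := by
      apply Polynomial.funext
      intro x
      simp only [Polynomial.eval_finset_sum, Polynomial.eval_mul, Polynomial.eval_C,
        Polynomial.eval_pow, Polynomial.eval_X]
      exact key x
    have hcoeff := congrArg (fun p => Polynomial.coeff p m) hpoly
    simp only [Polynomial.finset_sum_coeff, Polynomial.coeff_C_mul, Polynomial.coeff_X_pow] at hcoeff
    rw [Finset.sum_eq_single m (fun b _ hb => by simp [if_neg (by omega : ¬ m = b)])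
        (fun hmem => absurd (Finset.mem_range.2 (by omega)) hmem),
      Finset.sum_eq_single m (fun b _ hb => by simp [if_neg (by omega : ¬ m = b)])
        (fun hmem => absurd (Finset.mem_range.2 (by omega)) hmem)] at hcoeff
    simp only [if_pos rfl, mul_one] at hcoeff
    have h2 : ((j.factorial : ℕ) : ℝ) ≠ 0 := by positivity
    have h3 : ((m.factorial : ℕ) : ℝ) ≠ 0 := by positivity
    field_simp at hcoeff ⊢
    linarith [hcoeff]
  · rw [coeff_pow_eq_zero constantCoeff_logS hm, stirS_eq_zero hm, zero_mul, zero_div]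

lemma D_X_mul_Lif (k : ℤ) : d⁄dX ℝ (X * Lif k) = Lif (k - 1) := by
  ext n
  rw [PowerSeries.coeff_derivative, PowerSeries.coeff_succ_X_mul, Lif, Lif,
    PowerSeries.coeff_mk, PowerSeries.coeff_mk]
  have h1 : ((n : ℝ) + 1) ≠ 0 := by positivity
  have h2 : ((n.factorial : ℕ) : ℝ) ≠ 0 := by positivity
  have h3 : ((n : ℝ) + 1) ^ k ≠ 0 := zpow_ne_zero _ h1
  have h4 : ((n : ℝ) + 1) ^ (k - 1) ≠ 0 := zpow_ne_zero _ h1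
  have hz : ((n : ℝ) + 1) ^ k = ((n : ℝ) + 1) ^ (k - 1) * ((n : ℝ) + 1) := by
    rw [← zpow_add_one₀ h1, sub_add_cancel]
  rw [hz]
  field_simp

lemma constantCoeff_neg_logS : constantCoeff (R := ℝ) (-logS) = 0 := by
  rw [map_neg, constantCoeff_logS, neg_zero]

/-- Key derivative identity for the Lif composition. -/

lemma logS_mul_D_LifComp (k : ℤ) :
    logS * d⁄dX ℝ (compS (Lif k) (-logS)) =
      d⁄dX ℝ logS * (compS (Lif (k - 1)) (-logS) - compS (Lif k) (-logS)) := by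
  have hs := constantCoeff_neg_logS
  have h1 : (-logS) * compS (Lif k) (-logS) = compS (X * Lif k) (-logS) := by
    rw [compS_mul hs, compS_X hs]
  have h2 : d⁄dX ℝ ((-logS) * compS (Lif k) (-logS)) = compS (Lif (k-1)) (-logS) * d⁄dX ℝ (-logS) := by
    rw [h1, compS_deriv hs, D_X_mul_Lif]
  rw [Derivation.leibniz, smul_eq_mul, smul_eq_mul, map_neg] at h2
  have := h2
  -- -logS * D Mk + Mk * (-D logS) = M(k-1) * (-D logS)
  have h3 : -(logS * d⁄dX ℝ (compS (Lif k) (-logS)))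
      = -(d⁄dX ℝ logS * (compS (Lif (k - 1)) (-logS) - compS (Lif k) (-logS))) := by
    rw [neg_mul_comm] at h2
    calc -(logS * d⁄dX ℝ (compS (Lif k) (-logS)))
        = (-logS) * d⁄dX ℝ (compS (Lif k) (-logS)) := by ring
      _ = compS (Lif (k-1)) (-logS) * (- d⁄dX ℝ logS) - compS (Lif k) (-logS) * (- d⁄dX ℝ logS) := by
          rw [← h2]; ring
      _ = -(d⁄dX ℝ logS * (compS (Lif (k - 1)) (-logS) - compS (Lif k) (-logS))) := by ring
  exact neg_injective h3

def vS (lam : ℝ) : PowerSeries ℝ := C (R := ℝ) (1 / 2) * (onePow lam - 1)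

def LtS (lam : ℝ) : PowerSeries ℝ := compS logS (vS lam)

def GS (lam : ℝ) : PowerSeries ℝ := compS (d⁄dX ℝ logS) (vS lam)

lemma peters_eq (lam mu : ℝ) :
    peters lam mu = C (R := ℝ) ((2 : ℝ) ^ (-mu)) * compS (PowerSeries.exp ℝ) (C (R := ℝ) (-mu) * LtS lam) :=
  rfl

lemma constantCoeff_vS (lam : ℝ) : constantCoeff (R := ℝ) (vS lam) = 0 := by
  rw [vS, map_mul, map_sub, constantCoeff_onePow, map_one, sub_self, mul_zero]

lemma constantCoeff_LtS (lam : ℝ) : constantCoeff (R := ℝ) (LtS lam) = 0 := by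
  rw [LtS, constantCoeff_compS, constantCoeff_logS]

lemma constantCoeff_C_mul_LtS (a lam : ℝ) : constantCoeff (R := ℝ) (C (R := ℝ) a * LtS lam) = 0 := by
  rw [map_mul, constantCoeff_LtS, mul_zero]

lemma onePow_neg_one_sq : onePow (-1) * onePow (-1) = onePow (-2) := by
  have h1 : (1 + X) * onePow (-1 : ℝ) = 1 := by
    rw [show (-1 : ℝ) = 0 - 1 by ring, one_add_X_mul_onePow, onePow_zero]
  have h2 : (1 + X) * onePow (-2 : ℝ) = onePow (-1) := by
    rw [show (-2 : ℝ) = -1 - 1 by ring, one_add_X_mul_onePow]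
  have hne : (1 + X : PowerSeries ℝ) ≠ 0 := fun h => by
    have := congrArg (constantCoeff (R := ℝ)) h
    simp [constantCoeff_X] at this
  apply mul_left_cancel₀ hne
  rw [h2, show (1 + X) * (onePow (-1 : ℝ) * onePow (-1)) = ((1+X) * onePow (-1)) * onePow (-1) by
    ring, h1, one_mul]

lemma D_D_logS : d⁄dX ℝ (d⁄dX ℝ logS) = -(d⁄dX ℝ logS * d⁄dX ℝ logS) := by
  rw [D_logS, D_onePow, onePow_neg_one_sq, show (-1 : ℝ) - 1 = -2 by ring]
  ext n
  simp [PowerSeries.coeff_C_mul]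

lemma expComp_LtS_mul_GS (lam : ℝ) :
    compS (PowerSeries.exp ℝ) (LtS lam) * GS lam = 1 := by
  have hv := constantCoeff_vS lam
  have hL := constantCoeff_LtS lam
  apply PowerSeries.derivative.ext
  · rw [Derivation.leibniz, D_expComp hL, Derivation.map_one_eq_zero]
    have hDL : d⁄dX ℝ (LtS lam) = GS lam * d⁄dX ℝ (vS lam) := by
      rw [LtS, compS_deriv hv, GS]
    have hDG : d⁄dX ℝ (GS lam) = -(GS lam * GS lam) * d⁄dX ℝ (vS lam) := by
      rw [GS, compS_deriv hv, D_D_logS, show -(d⁄dX ℝ logS * d⁄dX ℝ logS)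
          = C (R := ℝ) (-1) * (d⁄dX ℝ logS * d⁄dX ℝ logS) by rw [map_neg, map_one]; ring,
        compS_C_mul, compS_mul hv, ← GS, map_neg, map_one]
      ring
    rw [hDL, hDG]
    simp only [smul_eq_mul]
    ring
  · rw [map_mul, constantCoeff_expComp, one_mul, GS, constantCoeff_compS,
      ← PowerSeries.coeff_zero_eq_constantCoeff_apply, PowerSeries.coeff_derivative, logS,
      map_one, PowerSeries.coeff_mk]
    norm_num

lemma peters_mul_GS (lam mu : ℝ) : peters lam mu * GS lam = C (R := ℝ) 2 * peters lam (mu + 1) := by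
  have hsplit : C (R := ℝ) (-mu) * LtS lam = C (R := ℝ) (-(mu+1)) * LtS lam + LtS lam := by
    rw [← add_one_mul, ← map_one (C (R := ℝ)), ← map_add]
    norm_num
  have h2 : (2:ℝ) ^ (-mu) = 2 * 2 ^ (-(mu+1)) := by
    rw [show -mu = (-(mu+1)) + 1 by ring, Real.rpow_add (by norm_num : (0:ℝ) < 2), Real.rpow_one]
    ring
  rw [peters_eq, peters_eq, hsplit,
    expComp_add (constantCoeff_C_mul_LtS _ _) (constantCoeff_LtS _), h2, map_mul]
  have key := expComp_LtS_mul_GS lam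
  linear_combination (C (R := ℝ) 2 * C (R := ℝ) ((2:ℝ) ^ (-(mu+1))) *
    compS (PowerSeries.exp ℝ) (C (R := ℝ) (-(mu+1)) * LtS lam)) * key

lemma D_peters (lam mu : ℝ) :
    d⁄dX ℝ (peters lam mu) = C (R := ℝ) (-(mu * lam)) * peters lam (mu + 1) * onePow (lam - 1) := by
  have hv := constantCoeff_vS lam
  have hw := constantCoeff_C_mul_LtS (-mu) lam
  have hDv : d⁄dX ℝ (vS lam) = C (R := ℝ) (lam / 2) * onePow (lam - 1) := by
    rw [vS, ← smul_eq_C_mul, Derivation.map_smul, map_sub, Derivation.map_one_eq_zero, sub_zero,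
      D_onePow, smul_eq_C_mul, ← mul_assoc, ← map_mul, show (1:ℝ)/2 * lam = lam/2 by ring]
  have hDw : d⁄dX ℝ (C (R := ℝ) (-mu) * LtS lam) = C (R := ℝ) (-mu) * (GS lam * d⁄dX ℝ (vS lam)) := by
    rw [← smul_eq_C_mul, Derivation.map_smul, LtS, compS_deriv hv, ← GS, smul_eq_C_mul]
  rw [peters_eq, ← smul_eq_C_mul, Derivation.map_smul, D_expComp hw, hDw, hDv, smul_eq_C_mul]
  have key := peters_mul_GS lam mu
  rw [peters_eq lam mu] at key
  have hc : C (R := ℝ) (-mu) * C (R := ℝ) (lam/2) * C (R := ℝ) 2 = C (R := ℝ) (-(mu*lam)) := by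
    rw [← map_mul, ← map_mul, show -mu * (lam/2) * 2 = -(mu*lam) by ring]
  linear_combination (C (R := ℝ) (-mu) * C (R := ℝ) (lam/2) * onePow (lam-1)) * key +
    (peters lam (mu+1) * onePow (lam-1)) * hc

lemma main_deriv (k : ℤ) (lam mu : ℝ) (m : ℕ) (hm : 1 ≤ m) :
    d⁄dX ℝ (peters lam mu * compS (Lif k) (-logS) * logS ^ m)
      = C (R := ℝ) (-(mu * lam)) *
          (peters lam (mu+1) * compS (Lif k) (-logS) * onePow (lam - 1) * logS ^ m)
        + peters lam mu * compS (Lif (k-1)) (-logS) * onePow (-1) * logS ^ (m-1)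
        + C (R := ℝ) ((m : ℝ) - 1) *
            (peters lam mu * compS (Lif k) (-logS) * onePow (-1) * logS ^ (m-1)) := by
  obtain ⟨m', rfl⟩ : ∃ m', m = m' + 1 := ⟨m - 1, by omega⟩
  have hMk := logS_mul_D_LifComp k
  rw [D_logS] at hMk
  rw [Derivation.leibniz, Derivation.leibniz, Derivation.leibniz_pow, D_peters, D_logS]
  simp only [smul_eq_mul, nsmul_eq_mul, smul_smul, Nat.add_sub_cancel]
  push_cast
  rw [show ((m':ℝ) + 1 - 1) = (m' : ℝ) by ring, map_natCast]
  linear_combination (peters lam mu * logS ^ m') * hMk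

lemma sum_eq_coeff (F : PowerSeries ℝ) {n m : ℕ} (hm : m ≤ n) :
    ∑ l ∈ Finset.range (n - m + 1),
        (n.choose l : ℝ) * stirS (n - l) m * ((l.factorial : ℝ) * coeff (R := ℝ) l F)
      = (n.factorial : ℝ) / m.factorial * coeff (R := ℝ) n (F * logS ^ m) := by
  rw [PowerSeries.coeff_mul, Finset.Nat.sum_antidiagonal_eq_sum_range_succ
    (f := fun a b => coeff (R := ℝ) a F * coeff (R := ℝ) b (logS ^ m)), Finset.mul_sum]
  rw [← Finset.sum_subset (Finset.range_subset_range.2 (by omega : n - m + 1 ≤ n + 1))]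
  · apply Finset.sum_congr rfl
    intro l hl
    rw [Finset.mem_range] at hl
    have hln : l ≤ n := by omega
    rw [coeff_logS_pow, Nat.cast_choose ℝ hln]
    have h1 : ((l.factorial : ℕ) : ℝ) ≠ 0 := by positivity
    have h2 : (((n - l).factorial : ℕ) : ℝ) ≠ 0 := by positivity
    have h3 : ((m.factorial : ℕ) : ℝ) ≠ 0 := by positivity
    field_simp
  · intro l hl hl'
    rw [Finset.mem_range] at hl hl'
    rw [coeff_pow_eq_zero constantCoeff_logS (by omega : n - l < m), mul_zero, mul_zero]

theorem CPhat_stirling_identity (k : ℤ) (lam mu : ℝ) (n m : ℕ)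
    (hn : 2 ≤ n) (hm1 : 1 ≤ m) (hm : m ≤ n - 1) :
    (m : ℝ) * ∑ l ∈ Finset.range (n - m + 1),
        (n.choose l : ℝ) * stirS (n - l) m * CPhat k lam mu 0 l
      = -(mu * lam * m) *
          ∑ l ∈ Finset.range (n - 1 - m + 1),
            ((n - 1).choose l : ℝ) * stirS (n - 1 - l) m * CPhat k lam (mu + 1) (lam - 1) l
        + (∑ l ∈ Finset.range (n - m + 1),
            ((n - 1).choose l : ℝ) * stirS (n - 1 - l) (m - 1) * CPhat (k - 1) lam mu (-1) l)
        + ((m : ℝ) - 1) *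
            ∑ l ∈ Finset.range (n - m + 1),
              ((n - 1).choose l : ℝ) * stirS (n - 1 - l) (m - 1) * CPhat k lam mu (-1) l := by
  have hm' : m ≤ n := by omega
  have hm1' : m - 1 ≤ n - 1 := by omega
  have hA := sum_eq_coeff (peters lam mu * compS (Lif k) (-logS) * onePow 0) hm'
  have hB := sum_eq_coeff (peters lam (mu+1) * compS (Lif k) (-logS) * onePow (lam-1))
    (show m ≤ n - 1 from hm)
  have hC := sum_eq_coeff (peters lam mu * compS (Lif (k-1)) (-logS) * onePow (-1)) hm1'
  have hD := sum_eq_coeff (peters lam mu * compS (Lif k) (-logS) * onePow (-1)) hm1'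
  rw [show n - 1 - (m - 1) = n - m by omega] at hC hD
  simp only [CPhat]
  rw [onePow_zero, mul_one] at hA ⊢
  rw [hA, hB, hC, hD]
  -- coefficient identity from the derivative identity
  have hd := congrArg (coeff (R := ℝ) (n-1)) (main_deriv k lam mu m hm1)
  rw [PowerSeries.coeff_derivative, show n - 1 + 1 = n by omega] at hd
  simp only [map_add, PowerSeries.coeff_C_mul] at hd
  have hn1 : ((n - 1 : ℕ) : ℝ) + 1 = (n : ℝ) := by
    have : n - 1 + 1 = n := by omega
    exact_mod_cast congrArg (Nat.cast (R := ℝ)) this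
  rw [hn1] at hd
  have hnne : (n : ℝ) ≠ 0 := by positivity
  have ha : coeff (R := ℝ) n (peters lam mu * compS (Lif k) (-logS) * logS ^ m)
      = (-(mu * lam) * coeff (R := ℝ) (n-1) (peters lam (mu+1) * compS (Lif k) (-logS) * onePow (lam-1) * logS ^ m)
        + coeff (R := ℝ) (n-1) (peters lam mu * compS (Lif (k-1)) (-logS) * onePow (-1) * logS ^ (m-1))
        + ((m:ℝ) - 1) * coeff (R := ℝ) (n-1) (peters lam mu * compS (Lif k) (-logS) * onePow (-1) * logS ^ (m-1))) / n := by
    rw [eq_div_iff hnne]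
    linarith [hd]
  rw [ha]
  have hfn : ((n.factorial : ℕ) : ℝ) = (n : ℝ) * (n-1).factorial := by
    exact_mod_cast congrArg (Nat.cast (R := ℝ)) (Nat.mul_factorial_pred (by omega : n ≠ 0)).symm
  have hfm : ((m.factorial : ℕ) : ℝ) = (m : ℝ) * (m-1).factorial := by
    exact_mod_cast congrArg (Nat.cast (R := ℝ)) (Nat.mul_factorial_pred (by omega : m ≠ 0)).symm
  have h1 : (((n-1).factorial : ℕ) : ℝ) ≠ 0 := by positivity
  have h2 : (((m-1).factorial : ℕ) : ℝ) ≠ 0 := by positivity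
  have hmne : (m : ℝ) ≠ 0 := by
    simpa using (Nat.cast_pos (α := ℝ)).2 (show 0 < m by omega) |>.ne'
  rw [hfn, hfm]
  field_simp
end
end

section
/- For every positive integer n, the recurrence CP_n^{(k)}(x;λ,μ) = −μλ·CP_{n-1}^{(k)}(x−λ+1;λ,μ+1) − x·CP_{n-1}^{(k)}(x+1;λ,μ) + (1/n)·Σ_{l=0}^{n-1} C(n,l+1) Ĉ_{n-1-l} [CP_{l+1}^{(k-1)}(x;λ,μ) − CP_{l+1}^{(k)}(x;λ,μ)] holds, where Ĉ_m are the Cauchy numbers of the second kind defined by t/((1+t)log(1+t)) = Σ_{m≥0} Ĉ_m t^m/m!. -/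
open PowerSeries Finset

noncomputable section

/-- The Cauchy numbers of the second kind: t/((1+t)log(1+t)) = Σ Ĉ_m t^m/m!. -/
def cauchyHat (m : ℕ) : ℝ :=
  m.factorial *
    PowerSeries.coeff (R := ℝ) m
      (PowerSeries.mk fun j => PowerSeries.coeff (R := ℝ) (j + 1) ((1 + PowerSeries.X) * logS))⁻¹

namespace Aux

lemma coeff_pow_eq_zero {h : PowerSeries ℝ} (hh : constantCoeff (R := ℝ) h = 0)
    {n m : ℕ} (hnm : n < m) : coeff (R := ℝ) n (h ^ m) = 0 := by
  have : (X : PowerSeries ℝ) ^ m ∣ h ^ m :=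
    pow_dvd_pow_of_dvd (PowerSeries.X_dvd_iff.2 hh) m
  exact PowerSeries.X_pow_dvd_iff.1 this n hnm

lemma coeff_compS (f h : PowerSeries ℝ) (n : ℕ) :
    coeff (R := ℝ) n (compS f h) =
      ∑ m ∈ range (n + 1), coeff (R := ℝ) m f * coeff (R := ℝ) n (h ^ m) := by
  simp [compS]

lemma coeff_compS_eq_sum {h : PowerSeries ℝ} (hh : constantCoeff (R := ℝ) h = 0)
    (f : PowerSeries ℝ) {n N : ℕ} (hN : n < N) :
    coeff (R := ℝ) n (compS f h) =
      coeff (R := ℝ) n (∑ m ∈ range N, C (R := ℝ) (coeff (R := ℝ) m f) * h ^ m) := by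
  rw [coeff_compS,
    show (coeff (R := ℝ) n) (∑ m ∈ range N, C (R := ℝ) (coeff (R := ℝ) m f) * h ^ m)
        = ∑ m ∈ range N, coeff (R := ℝ) n (C (R := ℝ) (coeff (R := ℝ) m f) * h ^ m) from map_sum _ _ _]
  simp only [coeff_C_mul]
  refine Finset.sum_subset (Finset.range_subset_range.2 hN) ?_
  intro m hm hm'
  simp only [Finset.mem_range, not_lt] at hm'
  rw [coeff_pow_eq_zero hh hm', mul_zero]

lemma coeff_mul_congr {A A' B : PowerSeries ℝ} (n : ℕ)
    (hA : ∀ i ≤ n, coeff (R := ℝ) i A = coeff (R := ℝ) i A') :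
    coeff (R := ℝ) n (A * B) = coeff (R := ℝ) n (A' * B) := by
  rw [coeff_mul, coeff_mul]
  refine Finset.sum_congr rfl fun p hp => ?_
  rw [Finset.HasAntidiagonal.mem_antidiagonal] at hp
  rw [hA p.1 (by omega)]

lemma compS_add (f g h : PowerSeries ℝ) :
    compS (f + g) h = compS f h + compS g h := by
  ext n
  simp [coeff_compS, add_mul, Finset.sum_add_distrib]

lemma compS_sub (f g h : PowerSeries ℝ) :
    compS (f - g) h = compS f h - compS g h := by
  ext n
  simp [coeff_compS, sub_mul, Finset.sum_sub_distrib]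

lemma compS_C_mul (a : ℝ) (f h : PowerSeries ℝ) :
    compS (C (R := ℝ) a * f) h = C (R := ℝ) a * compS f h := by
  ext n
  simp [coeff_compS, Finset.mul_sum, mul_assoc]

lemma compS_one (h : PowerSeries ℝ) : compS 1 h = 1 := by
  ext n
  rw [coeff_compS]
  rcases Nat.eq_zero_or_pos n with rfl | hn
  · simp
  · rw [Finset.sum_eq_zero]
    · simp [coeff_one, Nat.pos_iff_ne_zero.1 hn]
    · intro m hm
      rcases Nat.eq_zero_or_pos m with rfl | hm'
      · simp [coeff_one, Nat.pos_iff_ne_zero.1 hn]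
      · simp [coeff_one, Nat.pos_iff_ne_zero.1 hm']

lemma constantCoeff_compS (f h : PowerSeries ℝ) :
    constantCoeff (R := ℝ) (compS f h) = constantCoeff (R := ℝ) f := by
  rw [← coeff_zero_eq_constantCoeff_apply, coeff_compS]
  simp

lemma compS_X_mul {h : PowerSeries ℝ} (hh : constantCoeff (R := ℝ) h = 0)
    (g : PowerSeries ℝ) : compS (X * g) h = h * compS g h := by
  ext n
  rw [coeff_compS]
  have : coeff (R := ℝ) n (h * compS g h) =
      coeff (R := ℝ) n (h * ∑ m ∈ range (n + 1), C (R := ℝ) (coeff (R := ℝ) m g) * h ^ m) := by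
    rw [mul_comm h, mul_comm h]
    exact coeff_mul_congr n fun i hi =>
      coeff_compS_eq_sum hh g (lt_of_le_of_lt hi (Nat.lt_succ_self n))
  rw [this, Finset.mul_sum]
  have hrw : ∀ m : ℕ, h * (C (R := ℝ) (coeff (R := ℝ) m g) * h ^ m) = C (R := ℝ) (coeff (R := ℝ) m g) * h ^ (m + 1) := by
    intro m; ring
  simp_rw [hrw]
  rw [show (coeff (R := ℝ) n) (∑ m ∈ range (n+1), C (R := ℝ) (coeff (R := ℝ) m g) * h ^ (m+1))
        = ∑ m ∈ range (n+1), coeff (R := ℝ) n (C (R := ℝ) (coeff (R := ℝ) m g) * h ^ (m+1)) from map_sum _ _ _]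
  simp only [coeff_C_mul]
  rw [Finset.sum_range_succ' (fun m => coeff (R := ℝ) m (X * g) * coeff (R := ℝ) n (h ^ m)) n,
    Finset.sum_range_succ]
  simp only [coeff_succ_X_mul]
  rw [coeff_pow_eq_zero hh (Nat.lt_succ_self n)]
  simp


lemma derivative_compS {h : PowerSeries ℝ} (hh : constantCoeff (R := ℝ) h = 0)
    (f : PowerSeries ℝ) :
    derivative ℝ (compS f h) = compS (derivative ℝ f) h * derivative ℝ h := by
  ext n
  have hL : coeff (R := ℝ) n (derivative ℝ (compS f h))
      = ∑ m ∈ range (n + 1),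
          coeff (R := ℝ) (m + 1) f * ((m : ℝ) + 1) * coeff (R := ℝ) n (h ^ m * derivative ℝ h) := by
    rw [coeff_derivative, coeff_compS, Finset.sum_mul,
      Finset.sum_range_succ' (fun m => coeff (R := ℝ) m f * coeff (R := ℝ) (n + 1) (h ^ m) * ((n : ℝ) + 1))]
    rw [pow_zero, coeff_one, if_neg (Nat.succ_ne_zero n), mul_zero, zero_mul, add_zero]
    refine Finset.sum_congr rfl fun m hm => ?_
    have hd : derivative ℝ (h ^ (m + 1)) = (m + 1) • (h ^ m * derivative ℝ h) := by
      have := Derivation.leibniz_pow (derivative ℝ) (a := h) (n := m + 1)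
      simpa [Nat.add_sub_cancel, smul_smul, smul_eq_mul, mul_comm, mul_left_comm] using this
    have e1 : coeff (R := ℝ) (n + 1) (h ^ (m + 1)) * ((n : ℝ) + 1)
        = coeff (R := ℝ) n (derivative ℝ (h ^ (m + 1))) := (coeff_derivative _ n).symm
    rw [mul_assoc, e1, hd]
    rw [nsmul_eq_mul, ← map_natCast (C (R := ℝ)) (m + 1), coeff_C_mul]
    push_cast
    ring
  have hR : coeff (R := ℝ) n (compS (derivative ℝ f) h * derivative ℝ h)
      = ∑ m ∈ range (n + 1),
          coeff (R := ℝ) (m + 1) f * ((m : ℝ) + 1) * coeff (R := ℝ) n (h ^ m * derivative ℝ h) := by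
    rw [coeff_mul_congr n (fun i hi =>
      coeff_compS_eq_sum hh (derivative ℝ f) (lt_of_le_of_lt hi (Nat.lt_succ_self n))),
      Finset.sum_mul,
      show coeff (R := ℝ) n (∑ m ∈ range (n + 1),
          C (R := ℝ) (coeff (R := ℝ) m (derivative ℝ f)) * h ^ m * derivative ℝ h)
        = ∑ m ∈ range (n + 1),
          coeff (R := ℝ) n (C (R := ℝ) (coeff (R := ℝ) m (derivative ℝ f)) * h ^ m * derivative ℝ h)
        from map_sum _ _ _]
    refine Finset.sum_congr rfl fun m hm => ?_
    rw [mul_assoc, coeff_C_mul, coeff_derivative]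
  rw [hL, hR]


lemma ode_unique {A B Y Z : PowerSeries ℝ} (hA : constantCoeff (R := ℝ) A ≠ 0)
    (hY : A * derivative ℝ Y = B * Y) (hZ : A * derivative ℝ Z = B * Z)
    (h0 : constantCoeff (R := ℝ) Y = constantCoeff (R := ℝ) Z) : Y = Z := by
  ext n
  induction n using Nat.strong_induction_on with
  | _ n ih =>
    match n with
    | 0 => simpa using h0
    | n + 1 =>
      have key := congrArg (coeff (R := ℝ) n) hY
      have key2 := congrArg (coeff (R := ℝ) n) hZ
      rw [coeff_mul, coeff_mul, Finset.Nat.sum_antidiagonal_eq_sum_range_succ_mk,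
        Finset.Nat.sum_antidiagonal_eq_sum_range_succ_mk] at key key2
      rw [Finset.sum_range_succ'
        (fun i => coeff (R := ℝ) i A * coeff (R := ℝ) (n - i) (derivative ℝ Y))] at key
      rw [Finset.sum_range_succ'
        (fun i => coeff (R := ℝ) i A * coeff (R := ℝ) (n - i) (derivative ℝ Z))] at key2
      have htail : ∀ i ∈ range n,
          coeff (R := ℝ) (i + 1) A * coeff (R := ℝ) (n - (i + 1)) (derivative ℝ Y)
            = coeff (R := ℝ) (i + 1) A * coeff (R := ℝ) (n - (i + 1)) (derivative ℝ Z) := by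
        intro i hi
        rw [Finset.mem_range] at hi
        rw [coeff_derivative, coeff_derivative, ih (n - (i + 1) + 1) (by omega)]
      have hrhs : ∀ i ∈ range (n + 1),
          coeff (R := ℝ) i B * coeff (R := ℝ) (n - i) Y = coeff (R := ℝ) i B * coeff (R := ℝ) (n - i) Z := by
        intro i hi
        rw [ih (n - i) (by omega)]
      rw [Finset.sum_congr rfl htail, Finset.sum_congr rfl hrhs] at key
      have := key.trans key2.symm
      have h2 := add_left_cancel this
      simp only [Nat.sub_zero, coeff_zero_eq_constantCoeff, coeff_derivative] at h2
      have h3 := mul_left_cancel₀ hA h2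
      have h4 : ((n : ℝ) + 1) ≠ 0 := by positivity
      field_simp at h3
      tauto

lemma constantCoeff_onePow (a : ℝ) : constantCoeff (R := ℝ) (onePow a) = 1 := by
  rw [← coeff_zero_eq_constantCoeff_apply, onePow, coeff_mk]
  simp

lemma onePow_ode (a : ℝ) :
    (1 + X) * derivative ℝ (onePow a) = C (R := ℝ) a * onePow a := by
  ext n
  rw [add_mul, one_mul, map_add, coeff_C_mul]
  match n with
  | 0 =>
    rw [coeff_zero_eq_constantCoeff_apply, coeff_zero_eq_constantCoeff_apply,
      coeff_zero_eq_constantCoeff_apply]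
    rw [map_mul, constantCoeff_X, zero_mul, add_zero]
    rw [← coeff_zero_eq_constantCoeff_apply, coeff_derivative, ← coeff_zero_eq_constantCoeff_apply]
    simp [onePow, descPochhammer_succ_eval]
  | n + 1 =>
    rw [coeff_succ_X_mul, coeff_derivative, coeff_derivative]
    simp only [onePow, coeff_mk]
    rw [descPochhammer_succ_eval (n + 1) a, descPochhammer_succ_eval n a]
    have h1 : ((n + 1).factorial : ℝ) ≠ 0 := Nat.cast_ne_zero.2 (Nat.factorial_ne_zero _)
    have h2 : ((n + 1 + 1).factorial : ℝ) ≠ 0 := Nat.cast_ne_zero.2 (Nat.factorial_ne_zero _)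
    have h3 : (n.factorial : ℝ) ≠ 0 := Nat.cast_ne_zero.2 (Nat.factorial_ne_zero _)
    rw [Nat.factorial_succ (n + 1), Nat.factorial_succ n]
    push_cast
    field_simp
    ring

lemma one_add_X_ne_zero : (1 + X : PowerSeries ℝ) ≠ 0 := fun h => by
  have := congrArg (constantCoeff (R := ℝ)) h
  simp [map_add, constantCoeff_X] at this

lemma onePow_zero : onePow 0 = 1 := by
  ext n
  simp only [onePow, coeff_mk, coeff_one, descPochhammer_eval_zero]
  split_ifs with h <;> simp [h]

lemma onePow_one : onePow 1 = 1 + X := by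
  have hdesc : ∀ n : ℕ, (descPochhammer ℝ (n + 2)).eval 1 = 0 := by
    intro n
    induction n with
    | zero => simp [descPochhammer_succ_eval]
    | succ n ih => rw [descPochhammer_succ_eval, ih, zero_mul]
  ext n
  match n with
  | 0 => simp [onePow]
  | 1 => simp [onePow, coeff_one]
  | n + 2 =>
    simp only [onePow, coeff_mk, hdesc, zero_div, map_add, coeff_one]
    rw [coeff_X]
    simp

lemma onePow_add (a b : ℝ) : onePow a * onePow b = onePow (a + b) := by
  refine ode_unique (A := 1 + X) (B := C (R := ℝ) (a + b)) (by simp) ?_ (onePow_ode (a + b)) ?_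
  · rw [Derivation.leibniz, smul_eq_mul, smul_eq_mul, mul_add]
    have h1 := onePow_ode a
    have h2 := onePow_ode b
    calc (1 + X) * (onePow a * derivative ℝ (onePow b))
          + (1 + X) * (onePow b * derivative ℝ (onePow a))
        = onePow a * ((1 + X) * derivative ℝ (onePow b))
          + onePow b * ((1 + X) * derivative ℝ (onePow a)) := by ring
      _ = onePow a * (C (R := ℝ) b * onePow b) + onePow b * (C (R := ℝ) a * onePow a) := by rw [h1, h2]
      _ = C (R := ℝ) (a + b) * (onePow a * onePow b) := by rw [map_add]; ring
  · rw [map_mul, constantCoeff_onePow, constantCoeff_onePow, constantCoeff_onePow, one_mul]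

lemma derivative_onePow (a : ℝ) :
    derivative ℝ (onePow a) = C (R := ℝ) a * onePow (a - 1) := by
  have key : (1 + X) * derivative ℝ (onePow a) = (1 + X) * (C (R := ℝ) a * onePow (a - 1)) := by
    rw [onePow_ode a, mul_left_comm, ← onePow_one, onePow_add,
      show (1 : ℝ) + (a - 1) = a by ring]
  exact mul_left_cancel₀ one_add_X_ne_zero key


lemma derivative_exp : derivative ℝ (exp ℝ) = exp ℝ := by
  ext n
  rw [coeff_derivative, coeff_exp, coeff_exp]
  have h1 : ((n + 1).factorial : ℝ) ≠ 0 := Nat.cast_ne_zero.2 (Nat.factorial_ne_zero _)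
  have h3 : (n.factorial : ℝ) ≠ 0 := Nat.cast_ne_zero.2 (Nat.factorial_ne_zero _)
  simp only [eq_ratCast, Rat.cast_div, Rat.cast_one, Rat.cast_natCast]
  rw [Nat.factorial_succ]
  push_cast
  field_simp

lemma constantCoeff_logS : constantCoeff (R := ℝ) logS = 0 := by
  rw [← coeff_zero_eq_constantCoeff_apply, logS, coeff_mk]
  simp

lemma one_add_X_mul_derivative_logS : (1 + X) * derivative ℝ logS = 1 := by
  have hd : ∀ m : ℕ, coeff (R := ℝ) m (derivative ℝ logS) = (-1) ^ m := by
    intro m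
    rw [coeff_derivative, logS, coeff_mk, if_neg (Nat.succ_ne_zero m)]
    have : ((m : ℝ) + 1) ≠ 0 := by positivity
    field_simp
    push_cast
    ring
  ext n
  rw [add_mul, one_mul, map_add, coeff_one]
  match n with
  | 0 =>
    rw [coeff_mul]
    simp [hd, coeff_X]
  | n + 1 =>
    rw [coeff_succ_X_mul, hd (n + 1), hd n, if_neg (Nat.succ_ne_zero n)]
    ring

lemma constantCoeff_Lif (k : ℤ) : constantCoeff (R := ℝ) (Lif k) = 1 := by
  rw [← coeff_zero_eq_constantCoeff_apply, Lif, coeff_mk]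
  norm_num

lemma X_mul_derivative_Lif (k : ℤ) :
    X * derivative ℝ (Lif k) = Lif (k - 1) - Lif k := by
  ext n
  rw [map_sub]
  match n with
  | 0 =>
    rw [coeff_mul]
    simp [Lif, coeff_X]
  | n + 1 =>
    rw [coeff_succ_X_mul, coeff_derivative]
    simp only [Lif, coeff_mk]
    have hb : ((n : ℝ) + 1 + 1) ≠ 0 := by positivity
    have hbz : ((n : ℝ) + 1 + 1) ^ k ≠ 0 := zpow_ne_zero _ hb
    have h1 : ((n + 1).factorial : ℝ) ≠ 0 := Nat.cast_ne_zero.2 (Nat.factorial_ne_zero _)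
    have h3 : (n.factorial : ℝ) ≠ 0 := Nat.cast_ne_zero.2 (Nat.factorial_ne_zero _)
    push_cast
    rw [zpow_sub_one₀ hb]
    rw [Nat.factorial_succ]
    push_cast
    field_simp
    ring


lemma constantCoeff_u (lam : ℝ) :
    constantCoeff (R := ℝ) (C (R := ℝ) (1 / 2) * (onePow lam - 1)) = 0 := by
  rw [map_mul, map_sub, constantCoeff_onePow, constantCoeff_C, map_one, sub_self, mul_zero]

lemma constantCoeff_W (lam mu : ℝ) :
    constantCoeff (R := ℝ) (C (R := ℝ) (-mu) * compS logS (C (R := ℝ) (1 / 2) * (onePow lam - 1))) = 0 := by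
  rw [map_mul, constantCoeff_compS, constantCoeff_logS, mul_zero]

lemma constantCoeff_peters (lam mu : ℝ) :
    constantCoeff (R := ℝ) (peters lam mu) = (2 : ℝ) ^ (-mu) := by
  rw [peters, map_mul, constantCoeff_C, constantCoeff_compS, constantCoeff_exp, mul_one]

lemma one_add_onePow_ne_zero (lam : ℝ) : (1 + onePow lam : PowerSeries ℝ) ≠ 0 := fun h => by
  have := congrArg (constantCoeff (R := ℝ)) h
  rw [map_add, map_one, constantCoeff_onePow, map_zero] at this
  norm_num at this

lemma derivative_C_mul (a : ℝ) (f : PowerSeries ℝ) :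
    derivative ℝ (C (R := ℝ) a * f) = C (R := ℝ) a * derivative ℝ f := by
  rw [Derivation.leibniz, smul_eq_mul, smul_eq_mul, derivative_C, mul_zero, add_zero]

lemma one_add_mul_compS_dlog {h : PowerSeries ℝ} (hh : constantCoeff (R := ℝ) h = 0) :
    (1 + h) * compS (derivative ℝ logS) h = 1 := by
  have : compS ((1 + X) * derivative ℝ logS) h = (1 + h) * compS (derivative ℝ logS) h := by
    rw [add_mul, one_mul, compS_add, compS_X_mul hh, add_mul, one_mul]
  rw [← this, one_add_X_mul_derivative_logS, compS_one]

lemma peters_ode (lam mu : ℝ) :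
    (1 + onePow lam) * derivative ℝ (peters lam mu) =
      C (R := ℝ) (-(mu * lam)) * (onePow (lam - 1) * peters lam mu) := by
  set u : PowerSeries ℝ := C (R := ℝ) (1 / 2) * (onePow lam - 1) with hu_def
  set W : PowerSeries ℝ := C (R := ℝ) (-mu) * compS logS u with hW_def
  set E : PowerSeries ℝ := compS (exp ℝ) W with hE_def
  set cg : PowerSeries ℝ := compS (derivative ℝ logS) u with hcg_def
  have hu0 : constantCoeff (R := ℝ) u = 0 := constantCoeff_u lam
  have hW0 : constantCoeff (R := ℝ) W = 0 := constantCoeff_W lam mu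
  have hE' : derivative ℝ E = E * derivative ℝ W := by
    rw [hE_def, derivative_compS hW0, derivative_exp]
  have hW' : derivative ℝ W = C (R := ℝ) (-mu) * (cg * derivative ℝ u) := by
    rw [hW_def, derivative_C_mul, derivative_compS hu0]
  have hu' : derivative ℝ u = C (R := ℝ) (lam / 2) * onePow (lam - 1) := by
    rw [hu_def, derivative_C_mul, map_sub, derivative_onePow]
    rw [show derivative ℝ (1 : PowerSeries ℝ) = 0 from Derivation.map_one_eq_zero _]
    rw [sub_zero, ← mul_assoc, ← map_mul]
    congr 1
    ring
  have hinv : (1 + u) * cg = 1 := one_add_mul_compS_dlog hu0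
  have h2 : (1 + onePow lam : PowerSeries ℝ) = C (R := ℝ) 2 * (1 + u) := by
    rw [hu_def, mul_add, mul_one, ← mul_assoc, ← map_mul,
      show (2:ℝ) * (1/2) = 1 by norm_num, map_one, one_mul,
      show (C (R := ℝ)) (2:ℝ) = ((2:ℝ⟦X⟧)) by rw [map_ofNat]]
    ring
  have hP : peters lam mu = C (R := ℝ) ((2:ℝ) ^ (-mu)) * E := rfl
  have hP' : derivative ℝ (peters lam mu) = C (R := ℝ) ((2:ℝ) ^ (-mu)) * (E * derivative ℝ W) := by
    rw [hP, derivative_C_mul, hE']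
  rw [hP', hW', hu', h2, hP]
  have hCC : C (R := ℝ) (-(mu * lam)) = C (R := ℝ) 2 * C (R := ℝ) (-mu) * C (R := ℝ) (lam / 2) := by
    rw [← map_mul, ← map_mul]
    congr 1
    ring
  rw [hCC]
  linear_combination (C (R := ℝ) 2 * C (R := ℝ) ((2:ℝ) ^ (-mu)) * E * C (R := ℝ) (-mu)
    * (C (R := ℝ) (lam / 2) * onePow (lam - 1))) * hinv

lemma peters_succ (lam mu : ℝ) :
    peters lam mu = (1 + onePow lam) * peters lam (mu + 1) := by
  refine ode_unique (A := 1 + onePow lam)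
    (B := C (R := ℝ) (-(mu * lam)) * onePow (lam - 1)) ?_ ?_ ?_ ?_
  · rw [map_add, map_one, constantCoeff_onePow]; norm_num
  · rw [peters_ode]; ring
  · rw [Derivation.leibniz, smul_eq_mul, smul_eq_mul]
    have hdv : derivative ℝ (1 + onePow lam : PowerSeries ℝ)
        = C (R := ℝ) lam * onePow (lam - 1) := by
      rw [map_add, derivative_onePow]
      rw [show derivative ℝ (1 : PowerSeries ℝ) = 0 from Derivation.map_one_eq_zero _]
      rw [zero_add]
    have hQ := peters_ode lam (mu + 1)
    have hCC : C (R := ℝ) (-(mu * lam)) = C (R := ℝ) (-((mu + 1) * lam)) + C (R := ℝ) lam := by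
      rw [← map_add]
      congr 1
      ring
    rw [hdv, hCC, mul_add]
    linear_combination (1 + onePow lam) * hQ
  · rw [map_mul, map_add, map_one, constantCoeff_onePow, constantCoeff_peters,
      constantCoeff_peters]
    rw [show -(mu + 1) = -mu + (-1) by ring, Real.rpow_add (by norm_num : (0:ℝ) < 2),
      Real.rpow_neg_one]
    ring

lemma derivative_peters (lam mu : ℝ) :
    derivative ℝ (peters lam mu) =
      C (R := ℝ) (-(mu * lam)) * (onePow (lam - 1) * peters lam (mu + 1)) := by
  have key := peters_ode lam mu
  rw [peters_succ lam mu] at key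
  have : (1 + onePow lam) * derivative ℝ ((1 + onePow lam) * peters lam (mu + 1))
      = (1 + onePow lam) * (C (R := ℝ) (-(mu * lam)) * (onePow (lam - 1) * peters lam (mu + 1))) := by
    rw [key]; ring
  have h := mul_left_cancel₀ (one_add_onePow_ne_zero lam) this
  rw [← peters_succ lam mu] at h
  exact h


lemma dLk (k : ℤ) :
    X * derivative ℝ (compS (Lif k) logS)
      = (PowerSeries.mk fun j => coeff (R := ℝ) (j + 1) ((1 + X) * logS))⁻¹
        * (compS (Lif (k - 1)) logS - compS (Lif k) logS) := by
  set S : PowerSeries ℝ := PowerSeries.mk fun j => coeff (R := ℝ) (j + 1) ((1 + X) * logS) with hS_def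
  have hXS : X * S = (1 + X) * logS := by
    ext n
    match n with
    | 0 =>
      rw [coeff_mul, coeff_mul]
      simp [coeff_X, constantCoeff_logS, coeff_zero_eq_constantCoeff_apply]
    | n + 1 => rw [coeff_succ_X_mul, hS_def, coeff_mk]
  have hS0 : constantCoeff (R := ℝ) S = 1 := by
    rw [hS_def, ← coeff_zero_eq_constantCoeff_apply, coeff_mk, add_mul, one_mul, map_add,
      coeff_succ_X_mul]
    simp [logS]
  have hSne : S ≠ 0 := fun h => by rw [h, map_zero] at hS0; norm_num at hS0
  have hinv : S * S⁻¹ = 1 := PowerSeries.mul_inv_cancel _ (by rw [hS0]; norm_num)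
  refine mul_left_cancel₀ hSne ?_
  have hd : derivative ℝ (compS (Lif k) logS)
      = compS (derivative ℝ (Lif k)) logS * derivative ℝ logS :=
    derivative_compS constantCoeff_logS _
  have h1 : S * (X * derivative ℝ (compS (Lif k) logS))
      = ((1 + X) * derivative ℝ logS) * (logS * compS (derivative ℝ (Lif k)) logS) := by
    rw [hd]
    linear_combination (derivative ℝ logS * compS (derivative ℝ (Lif k)) logS) * hXS
  rw [h1, one_add_X_mul_derivative_logS, one_mul, ← compS_X_mul constantCoeff_logS,
    X_mul_derivative_Lif, compS_sub, ← mul_assoc, hinv, one_mul]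


lemma main_series (k : ℤ) (lam mu x : ℝ) :
    X * derivative ℝ (peters lam mu * compS (Lif k) logS * onePow (-x))
      = C (R := ℝ) (-(mu * lam)) *
          (X * (peters lam (mu + 1) * compS (Lif k) logS * onePow (-(x - lam + 1))))
        + C (R := ℝ) (-x) * (X * (peters lam mu * compS (Lif k) logS * onePow (-(x + 1))))
        + (PowerSeries.mk fun j => coeff (R := ℝ) (j + 1) ((1 + X) * logS))⁻¹ *
            (peters lam mu * compS (Lif (k - 1)) logS * onePow (-x)
              - peters lam mu * compS (Lif k) logS * onePow (-x)) := by
  have hG : derivative ℝ (onePow (-x)) = C (R := ℝ) (-x) * onePow (-(x + 1)) := by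
    rw [derivative_onePow, show -x - 1 = -(x + 1) by ring]
  have hdP := derivative_peters lam mu
  have hop : onePow (lam - 1) * onePow (-x) = onePow (-(x - lam + 1)) := by
    rw [onePow_add, show lam - 1 + -x = -(x - lam + 1) by ring]
  have hL := dLk k
  rw [Derivation.leibniz, Derivation.leibniz, smul_eq_mul, smul_eq_mul, smul_eq_mul,
    smul_eq_mul, hG, hdP]
  linear_combination (peters lam mu * onePow (-x)) * hL
    + (C (R := ℝ) (-(mu * lam)) * X * peters lam (mu + 1) * compS (Lif k) logS) * hop

end Aux

theorem CP_recurrence (k : ℤ) (lam mu x : ℝ) (n : ℕ) (hn : 0 < n) :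
    CP k lam mu x n =
      -(mu * lam) * CP k lam (mu + 1) (x - lam + 1) (n - 1)
        - x * CP k lam mu (x + 1) (n - 1)
        + (1 / (n : ℝ)) *
            ∑ l ∈ Finset.range n,
              (n.choose (l + 1) : ℝ) * cauchyHat (n - 1 - l) *
                (CP (k - 1) lam mu x (l + 1) - CP k lam mu x (l + 1)) := by
  obtain ⟨m, rfl⟩ : ∃ m, n = m + 1 := ⟨n - 1, (Nat.succ_pred_eq_of_pos hn).symm⟩
  have hfac : ∀ j : ℕ, (j.factorial : ℝ) ≠ 0 :=
    fun j => Nat.cast_ne_zero.2 (Nat.factorial_ne_zero _)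
  have hCPc : ∀ (k' : ℤ) (mu' x' : ℝ) (j : ℕ),
      coeff (R := ℝ) j (peters lam mu' * compS (Lif k') logS * onePow (-x'))
        = CP k' lam mu' x' j / j.factorial := by
    intro k' mu' x' j
    rw [CP]
    field_simp
  have hSh : ∀ j : ℕ,
      coeff (R := ℝ) j (PowerSeries.mk fun i => coeff (R := ℝ) (i + 1) ((1 + X) * logS))⁻¹
        = cauchyHat j / j.factorial := by
    intro j
    rw [cauchyHat]
    field_simp
  have hc := congrArg (coeff (R := ℝ) (m + 1)) (Aux.main_series k lam mu x)
  rw [coeff_succ_X_mul, coeff_derivative, map_add, map_add, coeff_C_mul, coeff_succ_X_mul,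
    coeff_C_mul, coeff_succ_X_mul] at hc
  simp only [hCPc] at hc
  rw [coeff_mul] at hc
  simp only [map_sub, hCPc, hSh] at hc
  rw [Finset.Nat.sum_antidiagonal_eq_sum_range_succ
      (fun i j => cauchyHat i / (i.factorial : ℝ) *
        (CP (k - 1) lam mu x j / (j.factorial : ℝ) - CP k lam mu x j / (j.factorial : ℝ))),
    Finset.sum_range_succ, Nat.sub_self] at hc
  have hCP0 : CP (k - 1) lam mu x 0 = CP k lam mu x 0 := by
    rw [CP, CP]
    rw [coeff_zero_eq_constantCoeff_apply, coeff_zero_eq_constantCoeff_apply, map_mul, map_mul,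
      map_mul, map_mul, Aux.constantCoeff_compS, Aux.constantCoeff_compS,
      Aux.constantCoeff_Lif, Aux.constantCoeff_Lif]
  rw [hCP0, sub_self, mul_zero, add_zero] at hc
  -- hc : CP k lam mu x (m+1)/(m+1)! * (m+1)
  --        = -(mu*lam) * (CPa m / m!) + -x * (CPb m / m!) + Σ_{j∈range(m+1)} ...
  simp only [Nat.add_sub_cancel]
  have hsum : ∑ l ∈ Finset.range (m + 1),
        ((m + 1).choose (l + 1) : ℝ) * cauchyHat (m - l) *
          (CP (k - 1) lam mu x (l + 1) - CP k lam mu x (l + 1))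
      = ∑ j ∈ Finset.range (m + 1),
        ((m + 1).choose (m + 1 - j) : ℝ) * cauchyHat j *
          (CP (k - 1) lam mu x (m + 1 - j) - CP k lam mu x (m + 1 - j)) := by
    rw [← Finset.sum_range_reflect]
    refine Finset.sum_congr rfl fun j hj => ?_
    rw [Finset.mem_range] at hj
    rw [Nat.add_sub_cancel, show m - (m - j) = j by omega, show m - j + 1 = m + 1 - j by omega]
  rw [hsum]
  have hstep : CP k lam mu x (m + 1)
      = (CP k lam mu x (m + 1) / ((m + 1).factorial : ℝ) * ((m : ℝ) + 1))
          * (m.factorial : ℝ) := by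
    rw [Nat.factorial_succ]
    push_cast
    field_simp
  rw [hstep, hc]
  rw [add_mul, add_mul, Finset.sum_mul, Finset.mul_sum]
  push_cast
  have hterm : ∀ j ∈ Finset.range (m + 1),
      cauchyHat j / (j.factorial : ℝ) *
          (CP (k - 1) lam mu x (m + 1 - j) / ((m + 1 - j).factorial : ℝ)
            - CP k lam mu x (m + 1 - j) / ((m + 1 - j).factorial : ℝ)) * (m.factorial : ℝ)
        = 1 / ((m : ℝ) + 1) *
            (((m + 1).choose (m + 1 - j) : ℝ) * cauchyHat j *
              (CP (k - 1) lam mu x (m + 1 - j) - CP k lam mu x (m + 1 - j))) := by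
    intro j hj
    rw [Finset.mem_range] at hj
    have hj' : j ≤ m + 1 := by omega
    have hch : (((m + 1).choose (m + 1 - j)) : ℝ) * j.factorial * (m + 1 - j).factorial
        = ((m + 1).factorial : ℝ) := by
      rw [Nat.choose_symm hj']
      exact_mod_cast congrArg (Nat.cast (R := ℝ))
        (Nat.choose_mul_factorial_mul_factorial hj')
    have hm1 : ((m : ℝ) + 1) ≠ 0 := by positivity
    have hf1 := hfac j
    have hf2 := hfac (m + 1 - j)
    have hfm := hfac m
    have hfacsucc : ((m + 1).factorial : ℝ) = ((m : ℝ) + 1) * (m.factorial : ℝ) := by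
      rw [Nat.factorial_succ]; push_cast; ring
    have hch2 : (((m + 1).choose j) : ℝ) * j.factorial * (m + 1 - j).factorial
        = ((m + 1).factorial : ℝ) := by
      exact_mod_cast congrArg (Nat.cast (R := ℝ))
        (Nat.choose_mul_factorial_mul_factorial hj')
    field_simp
    linear_combination (-(cauchyHat j *
      (CP (k - 1) lam mu x (m + 1 - j) - CP k lam mu x (m + 1 - j)))) *
        (hch.trans hfacsucc)
  rw [Finset.sum_congr rfl hterm]
  have hfm := hfac m
  field_simp
  ring
end
end
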